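/- Fix Seifert data and the associated star-shaped plumbing lattice. Let r* ∈ [0,1)^𝒱 be the unique representative of the coset Z_K + ℤ^𝒱 with all coordinates in [0,1), and set Δ := (Z_K − r*)_{v₀} ∈ ℤ. For ℓ ∈ ℤ≥0, let x(ℓ) be the least element of {x ∈ ℤ^𝒱 : x_{v₀} = ℓ and (x, E_v) ≤ 0 for all v ≠ v₀}, and let x*(ℓ) be the least element of {x ∈ r* + ℤ^𝒱 : x_{v₀} = r*_{v₀} + ℓ and (x, E_v) ≤ 0 for all v ≠ v₀}. Define χ(y) := −(y − Z_K, y)/2 and N*(ℓ) := −(x*(ℓ), E_{v₀}). Then: (a) χ(x*(ℓ)) = χ(x(Δ − ℓ)) for every 0 ≤ ℓ ≤ Δ; (b) N(ℓ) + N*(Δ − 1 − ℓ) = −2 for every 0 ≤ ℓ ≤ Δ − 1, where N(ℓ) := b₀·ℓ − Σᵢ ⌈ℓ·ωᵢ/αᵢ⌉. -/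

import Mathlib

open Matrix

set_option linter.unusedSectionVars false
set_option maxHeartbeats 2000000


def ncf : List ℚ → ℚ
  | [] => 0
  | b :: rest => b - 1 / ncf rest

/-- numerator/denominator pair of a negative continued fraction -/
def cfPair : List ℤ → ℤ × ℤ
  | [] => (1, 0)
  | b :: l => (b * (cfPair l).1 - (cfPair l).2, (cfPair l).1)

lemma cf_spec : ∀ l : List ℤ, (∀ z ∈ l, 2 ≤ z) →
    0 ≤ (cfPair l).2 ∧ (cfPair l).2 < (cfPair l).1 ∧
    IsCoprime (cfPair l).1 (cfPair l).2 ∧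
    ncf (l.map (Int.cast : ℤ → ℚ)) = ((cfPair l).1 : ℚ) / ((cfPair l).2 : ℚ) := by
  intro l
  induction l with
  | nil =>
    intro _
    refine ⟨le_refl 0, zero_lt_one, isCoprime_one_left, ?_⟩
    simp [ncf, cfPair]
  | cons hd tl ih =>
    intro hmem
    have hhd : 2 ≤ hd := hmem hd List.mem_cons_self
    obtain ⟨h1, h2, h3, h4⟩ := ih (fun z hz => hmem z (List.mem_cons_of_mem _ hz))
    set n := (cfPair tl).1 with hn
    set dd := (cfPair tl).2 with hdd
    have hcf : cfPair (hd :: tl) = (hd * n - dd, n) := rfl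
    have hnpos : 0 < n := lt_of_le_of_lt h1 h2
    have hlt : n < hd * n - dd := by nlinarith
    refine ⟨le_of_lt hnpos, hlt, ?_, ?_⟩
    · rw [hcf]
      have h6 : IsCoprime (-dd) n := (h3.symm).neg_left
      have h7 := (h6.add_mul_right_left hd)
      have h5 : -dd + hd * n = hd * n - dd := by ring
      rw [h5] at h7
      exact h7
    · rw [hcf]
      simp only [List.map_cons, ncf]
      rw [h4]
      rcases eq_or_lt_of_le h1 with h0 | h0
      · have hdd0 : dd = 0 := h0.symm
        rw [hdd0]
        have hnQ : (n : ℚ) ≠ 0 := by positivity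
        push_cast
        rw [div_zero, div_zero, sub_zero]
        field_simp
        ring
      · have hddQ : (dd : ℚ) ≠ 0 := by positivity
        have hnQ : (n : ℚ) ≠ 0 := by positivity
        rw [one_div_div]
        push_cast
        field_simp

/-- numerators of the tails of the continued fraction, padded by 0 -/
def legN (L : List ℤ) (k : ℕ) : ℤ := if k ≤ L.length then (cfPair (L.drop k)).1 else 0

lemma legN_len (L : List ℤ) : legN L L.length = 1 := by
  rw [legN, if_pos le_rfl, List.drop_length]
  rfl

lemma legN_len1 (L : List ℤ) : legN L (L.length + 1) = 0 := by
  rw [legN, if_neg (by omega)]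

lemma legN_rec (L : List ℤ) (k : ℕ) (hk : k < L.length) :
    legN L k = L[k] * legN L (k + 1) - legN L (k + 2) := by
  have hdrop : L.drop k = L[k] :: L.drop (k + 1) := List.drop_eq_getElem_cons hk
  have h1 : legN L k = (cfPair (L.drop k)).1 := by rw [legN, if_pos (by omega)]
  rw [h1, hdrop]
  have h2 : (cfPair (L[k] :: L.drop (k+1))).1
      = L[k] * (cfPair (L.drop (k+1))).1 - (cfPair (L.drop (k+1))).2 := rfl
  rw [h2]
  have h3 : (cfPair (L.drop (k+1))).1 = legN L (k+1) := by rw [legN, if_pos (by omega)]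
  have h4 : (cfPair (L.drop (k+1))).2 = legN L (k+2) := by
    by_cases hk1 : k + 1 < L.length
    · have hdrop2 : L.drop (k+1) = L[k+1] :: L.drop (k+2) := List.drop_eq_getElem_cons hk1
      rw [hdrop2, legN, if_pos (by omega)]
      rfl
    · have hk1' : k + 1 = L.length := by omega
      rw [hk1', List.drop_length, legN, if_neg (by omega)]
      rfl
  rw [h3, h4]

lemma legN_fst (L : List ℤ) : legN L 0 = (cfPair L).1 := by
  rw [legN, if_pos (by omega), List.drop_zero]

lemma legN_snd (L : List ℤ) (h : 0 < L.length) : legN L 1 = (cfPair L).2 := by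
  have hdrop : L.drop 0 = L[0] :: L.drop 1 := List.drop_eq_getElem_cons h
  rw [List.drop_zero] at hdrop
  rw [legN, if_pos (by omega)]
  conv_rhs => rw [hdrop]
  rfl


/-- ceiling of integer division -/
lemma ceil_int_div (n a : ℤ) (ha : 0 < a) : ⌈(n : ℚ) / (a : ℚ)⌉ = (n + a - 1) / a := by
  rw [Int.ceil_eq_iff]
  set k := (n + a - 1) / a with hk
  have h1 := Int.mul_ediv_add_emod (n + a - 1) a
  have h2 := Int.emod_nonneg (n + a - 1) (ne_of_gt ha)
  have h3 := Int.emod_lt_of_pos (n + a - 1) ha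
  rw [← hk] at h1
  have haQ : (0:ℚ) < (a:ℚ) := by exact_mod_cast ha
  have e1 : n ≤ k * a := by nlinarith
  have e2 : (k - 1) * a < n := by nlinarith
  constructor
  · rw [show ((k:ℚ) - 1) = (((k - 1 : ℤ)):ℚ) by push_cast; ring, lt_div_iff₀ haQ]
    exact_mod_cast e2
  · rw [div_le_iff₀ haQ]
    exact_mod_cast e1

section Leg

variable (νl : ℕ) (bl : ℕ → ℤ) (Nl : ℕ → ℤ)

/-- the forward-floor greatest sequence on a leg -/
def legw (Nl : ℕ → ℤ) (m : ℤ) : ℕ → ℤ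
  | 0 => m
  | t + 1 => (legw Nl m t * Nl (t + 1) + Nl t - Nl (t + 1) - 1) / Nl t

/-- padded version, equal to 0 beyond the leg -/
def legwp (νl : ℕ) (Nl : ℕ → ℤ) (m : ℤ) (t : ℕ) : ℤ :=
  if t ≤ νl then legw Nl m t else 0

variable (hrec : ∀ k < νl, Nl k = bl k * Nl (k + 1) - Nl (k + 2))
  (hb2 : ∀ k < νl, 2 ≤ bl k)
  (hNν : Nl νl = 1) (hNν1 : Nl (νl + 1) = 0)

include hrec hb2 hNν hNν1 in
lemma legN_dec : ∀ k ≤ νl, Nl (k + 1) < Nl k ∧ 0 < Nl k := by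
  have H : ∀ g k, k ≤ νl → νl - k ≤ g → Nl (k + 1) < Nl k ∧ 0 < Nl k := by
    intro g
    induction g with
    | zero =>
      intro k hk hg
      have : k = νl := by omega
      subst this
      rw [hNν, hNν1]
      exact ⟨zero_lt_one, zero_lt_one⟩
    | succ g ih =>
      intro k hk hg
      rcases eq_or_lt_of_le hk with h | h
      · subst h
        rw [hNν, hNν1]
        exact ⟨zero_lt_one, zero_lt_one⟩
      · have h1 := ih (k + 1) (by omega) (by omega)
        have h2 := hrec k h
        have h3 := hb2 k h
        constructor
        · nlinarith [h1.1, h1.2]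
        · nlinarith [h1.1, h1.2]
  exact fun k hk => H (νl - k) k hk le_rfl

include hrec hb2 hNν hNν1 in
lemma leg_rem (m : ℤ) : ∀ t ≤ νl,
    0 ≤ legw Nl m t * Nl (t+1) + Nl t - Nl (t+1) - 1 - legw Nl m (t+1) * Nl t ∧
    legw Nl m t * Nl (t+1) + Nl t - Nl (t+1) - 1 - legw Nl m (t+1) * Nl t < Nl t := by
  intro t ht
  have h0 : 0 < Nl t := (legN_dec νl bl Nl hrec hb2 hNν hNν1 t ht).2
  have heq : legw Nl m (t+1) = (legw Nl m t * Nl (t+1) + Nl t - Nl (t+1) - 1) / Nl t := rfl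
  set A := legw Nl m t * Nl (t+1) + Nl t - Nl (t+1) - 1 with hA
  have h1 := Int.mul_ediv_add_emod A (Nl t)
  have h2 := Int.emod_nonneg A (ne_of_gt h0)
  have h3 := Int.emod_lt_of_pos A h0
  have hc : Nl t * (A / Nl t) = (A / Nl t) * Nl t := mul_comm _ _
  rw [heq]
  constructor <;> linarith

include hrec hb2 hNν hNν1 in
lemma leg_constraint (m : ℤ) : ∀ k < νl,
    2 - bl k ≤ legwp νl Nl m k - bl k * legwp νl Nl m (k+1) + legwp νl Nl m (k+2) := by
  intro k hk
  have hpos : ∀ t ≤ νl, 0 < Nl t := fun t ht => (legN_dec νl bl Nl hrec hb2 hNν hNν1 t ht).2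
  have e1 := leg_rem νl bl Nl hrec hb2 hNν hNν1 m k (le_of_lt hk)
  have hwpk : legwp νl Nl m k = legw Nl m k := if_pos (by omega)
  have hwpk1 : legwp νl Nl m (k+1) = legw Nl m (k+1) := if_pos (by omega)
  have hr := hrec k hk
  set E2 := legw Nl m (k+1) * Nl (k+2) + Nl (k+1) - Nl (k+2) - 1
      - legwp νl Nl m (k+2) * Nl (k+1) with hE2
  have hE2bounds : 0 ≤ E2 ∧ E2 < Nl (k+1) := by
    by_cases hk2 : k + 2 ≤ νl
    · have hwpk2 : legwp νl Nl m (k+2) = legw Nl m (k+2) := if_pos hk2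
      rw [hE2, hwpk2]
      exact leg_rem νl bl Nl hrec hb2 hNν hNν1 m (k+1) (by omega)
    · have hkν : k + 1 = νl := by omega
      have hwpk2 : legwp νl Nl m (k+2) = 0 := if_neg (by omega)
      have hNk1 : Nl (k+1) = 1 := by rw [hkν]; exact hNν
      have hNk2 : Nl (k+2) = 0 := by
        have : k + 2 = νl + 1 := by omega
        rw [this]; exact hNν1
      rw [hE2, hwpk2, hNk1, hNk2]
      norm_num
  have hident : Nl (k+1) * (legwp νl Nl m k - bl k * legwp νl Nl m (k+1)
      + legwp νl Nl m (k+2) + bl k - 2)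
      = (legw Nl m k * Nl (k+1) + Nl k - Nl (k+1) - 1 - legw Nl m (k+1) * Nl k) - E2 := by
    rw [hE2, hwpk, hwpk1]
    linear_combination (legw Nl m (k+1) - 1) * hr
  have hp := hpos (k+1) (by omega)
  nlinarith [e1.1, hE2bounds.2, hident, hp]

include hrec hb2 hNν hNν1 in
lemma leg_greatest (m : ℤ) (Z : ℕ → ℤ) (hZ0 : Z 0 = m) (hZtop : Z (νl+1) = 0)
    (hZc : ∀ k < νl, 2 - bl k ≤ Z k - bl k * Z (k+1) + Z (k+2)) :
    ∀ t ≤ νl + 1, Z t ≤ legwp νl Nl m t := by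
  have hpos : ∀ t ≤ νl, 0 < Nl t := fun t ht => (legN_dec νl bl Nl hrec hb2 hNν hNν1 t ht).2
  have back : ∀ g t, t ≤ νl → νl - t ≤ g →
      Z (t+1) * Nl t ≤ Z t * Nl (t+1) + Nl t - Nl (t+1) - 1 := by
    intro g
    induction g with
    | zero =>
      intro t ht hg
      have : t = νl := by omega
      subst this
      rw [hZtop, hNν, hNν1]
      norm_num
    | succ g ih =>
      intro t ht hg
      rcases eq_or_lt_of_le ht with h | h
      · subst h
        rw [hZtop, hNν, hNν1]
        norm_num
      · have IH := ih (t+1) (by omega) (by omega)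
        have hb' : bl t * Z (t+1) ≤ Z t + Z (t+2) + bl t - 2 := by
          have := hZc t h; linarith
        have h5 := mul_le_mul_of_nonneg_right hb' (le_of_lt (hpos (t+1) (by omega)))
        calc Z (t+1) * Nl t = Z (t+1) * (bl t * Nl (t+1) - Nl (t+2)) := by rw [hrec t h]
          _ = (bl t * Z (t+1)) * Nl (t+1) - Z (t+1) * Nl (t+2) := by ring
          _ ≤ (Z t + Z (t+2) + bl t - 2) * Nl (t+1) - Z (t+1) * Nl (t+2) := by linarith
          _ = Z t * Nl (t+1) + Z (t+2) * Nl (t+1) + (bl t - 2) * Nl (t+1)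
              - Z (t+1) * Nl (t+2) := by ring
          _ ≤ Z t * Nl (t+1) + (Z (t+1) * Nl (t+2) + Nl (t+1) - Nl (t+2) - 1)
              + (bl t - 2) * Nl (t+1) - Z (t+1) * Nl (t+2) := by linarith
          _ = Z t * Nl (t+1) + (bl t - 1) * Nl (t+1) - Nl (t+2) - 1 := by ring
          _ = Z t * Nl (t+1) + Nl t - Nl (t+1) - 1 := by linear_combination -(hrec t h)
  intro t
  induction t with
  | zero =>
    intro _
    have : legwp νl Nl m 0 = m := if_pos (by omega)
    rw [this, hZ0]
  | succ t iht =>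
    intro ht1
    by_cases h : t + 1 ≤ νl
    · have hwp : legwp νl Nl m (t+1) = (legw Nl m t * Nl (t+1) + Nl t - Nl (t+1) - 1) / Nl t := by
        rw [legwp, if_pos h]; rfl
      have hwt : legwp νl Nl m t = legw Nl m t := if_pos (by omega)
      have hIH := iht (by omega)
      rw [hwt] at hIH
      have hB := back (νl - t) t (by omega) le_rfl
      have hN1 : 0 ≤ Nl (t+1) := by
        rcases eq_or_lt_of_le h with h' | h'
        · rw [show t + 1 = νl from h', hNν]; norm_num
        · exact le_of_lt (hpos (t+1) (by omega))
      have hmono := mul_le_mul_of_nonneg_right hIH hN1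
      rw [hwp, Int.le_ediv_iff_mul_le (hpos t (by omega))]
      linarith
    · have : t + 1 = νl + 1 := by omega
      rw [this, hZtop, legwp, if_neg (by omega)]

include hrec hb2 hNν hNν1 in
lemma leg_lb (m : ℤ) (Z : ℕ → ℤ) (hZ0 : Z 0 = m) (hZtop : Z (νl+1) = 0)
    (hZc : ∀ k < νl, Z k - bl k * Z (k+1) + Z (k+2) ≤ 0) :
    ∀ t ≤ νl + 1, legwp νl Nl m t ≤ Z t := by
  have hpos : ∀ t ≤ νl, 0 < Nl t := fun t ht => (legN_dec νl bl Nl hrec hb2 hNν hNν1 t ht).2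
  have back : ∀ g t, t ≤ νl → νl - t ≤ g → Z t * Nl (t+1) ≤ Z (t+1) * Nl t := by
    intro g
    induction g with
    | zero =>
      intro t ht hg
      have : t = νl := by omega
      subst this
      rw [hZtop, hNν, hNν1]
      norm_num
    | succ g ih =>
      intro t ht hg
      rcases eq_or_lt_of_le ht with h | h
      · subst h
        rw [hZtop, hNν, hNν1]
        norm_num
      · have IH := ih (t+1) (by omega) (by omega)
        have hb' : Z t + Z (t+2) ≤ bl t * Z (t+1) := by
          have := hZc t h; linarith
        have h5 := mul_le_mul_of_nonneg_right hb' (le_of_lt (hpos (t+1) (by omega)))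
        calc Z t * Nl (t+1)
            = (Z t + Z (t+2)) * Nl (t+1) - Z (t+2) * Nl (t+1) := by ring
          _ ≤ (bl t * Z (t+1)) * Nl (t+1) - Z (t+2) * Nl (t+1) := by linarith
          _ ≤ (bl t * Z (t+1)) * Nl (t+1) - Z (t+1) * Nl (t+2) := by linarith
          _ = Z (t+1) * (bl t * Nl (t+1) - Nl (t+2)) := by ring
          _ = Z (t+1) * Nl t := by rw [← hrec t h]
  intro t
  induction t with
  | zero =>
    intro _
    have : legwp νl Nl m 0 = m := if_pos (by omega)
    rw [this, hZ0]
  | succ t iht =>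
    intro ht1
    by_cases h : t + 1 ≤ νl
    · have hwt : legwp νl Nl m t = legw Nl m t := if_pos (by omega)
      have hIH := iht (by omega)
      rw [hwt] at hIH
      have hB := back (νl - t) t (by omega) le_rfl
      have hN1 : 0 ≤ Nl (t+1) := by
        rcases eq_or_lt_of_le h with h' | h'
        · rw [show t + 1 = νl from h', hNν]; norm_num
        · exact le_of_lt (hpos (t+1) (by omega))
      have ht0 : 0 < Nl t := hpos t (by omega)
      have hmono := mul_le_mul_of_nonneg_right hIH hN1
      -- legwp (t+1) * Nl t ≤ numerator(legw t) ≤ numerator(Z t) ≤ Z (t+1) * Nl t + (Nl t - Nl (t+1) - 1) < (Z (t+1) + 1) * Nl t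
      have hwp : legwp νl Nl m (t+1) = (legw Nl m t * Nl (t+1) + Nl t - Nl (t+1) - 1) / Nl t := by
        rw [legwp, if_pos h]; rfl
      set A := legw Nl m t * Nl (t+1) + Nl t - Nl (t+1) - 1 with hA
      have h1 := Int.mul_ediv_add_emod A (Nl t)
      have h2 := Int.emod_nonneg A (ne_of_gt ht0)
      have hc : Nl t * (A / Nl t) = (A / Nl t) * Nl t := mul_comm _ _
      have hlt : legwp νl Nl m (t+1) * Nl t < (Z (t+1) + 1) * Nl t := by
        rw [hwp]
        nlinarith
      have := lt_of_mul_lt_mul_right hlt (le_of_lt ht0)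
      omega
    · have : t + 1 = νl + 1 := by omega
      rw [this, hZtop, legwp, if_neg (by omega)]

end Leg


section Abstract

variable {V : Type*} [Fintype V] [DecidableEq V]

lemma Bdef (I : Matrix V V ℚ) (y : V → ℚ) (v : V) :
    y ⬝ᵥ I.mulVec (Pi.single v 1) = ∑ u, y u * I u v := by
  rw [Matrix.mulVec_single_one]
  simp only [dotProduct, Matrix.col_apply]

lemma Bsymm (I : Matrix V V ℚ) (hsym : I.IsSymm) (y z : V → ℚ) :
    y ⬝ᵥ I.mulVec z = z ⬝ᵥ I.mulVec y := by
  simp only [dotProduct, Matrix.mulVec, Finset.mul_sum]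
  rw [Finset.sum_comm]
  refine Finset.sum_congr rfl fun u _ => Finset.sum_congr rfl fun w _ => ?_
  have h := hsym.apply u w
  rw [h]
  ring

lemma Bsingle (I : Matrix V V ℚ) (v : V) :
    (Pi.single v 1 : V → ℚ) ⬝ᵥ I.mulVec (Pi.single v 1) = I v v := by
  rw [Bdef]
  rw [Finset.sum_eq_single v]
  · simp
  · intro u _ hu
    simp [Pi.single_eq_of_ne hu]
  · intro h
    exact absurd (Finset.mem_univ v) h

lemma Bint (I : Matrix V V ℚ) (hIint : ∀ u v, ∃ k : ℤ, I u v = (k : ℚ))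
    (z : V → ℚ) (hz : ∀ u, ∃ k : ℤ, z u = (k : ℚ)) (v : V) :
    ∃ K : ℤ, z ⬝ᵥ I.mulVec (Pi.single v 1) = (K : ℚ) := by
  choose f hf using hz
  choose g hg using fun u => hIint u v
  refine ⟨∑ u, f u * g u, ?_⟩
  rw [Bdef]
  push_cast
  exact Finset.sum_congr rfl fun u _ => by rw [hf u, hg u]

lemma chiZK (I : Matrix V V ℚ) (hsym : I.IsSymm) (ZK : V → ℚ) (y : V → ℚ) :
    -(((ZK - y) - ZK) ⬝ᵥ I.mulVec (ZK - y)) / 2 = -((y - ZK) ⬝ᵥ I.mulVec y) / 2 := by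
  have h1 : ZK - y - ZK = -y := by abel
  rw [h1]
  rw [Matrix.mulVec_sub, neg_dotProduct, dotProduct_sub, sub_dotProduct,
    Bsymm I hsym y ZK]
  ring

lemma chi_step (I : Matrix V V ℚ) (hsym : I.IsSymm) (ZK : V → ℚ)
    (hZK : ∀ v, ZK ⬝ᵥ I.mulVec (Pi.single v 1) = I v v + 2) (y : V → ℚ) (v : V) :
    -((y + Pi.single v 1 - ZK) ⬝ᵥ I.mulVec (y + Pi.single v 1)) / 2
      = -((y - ZK) ⬝ᵥ I.mulVec y) / 2 + 1 - y ⬝ᵥ I.mulVec (Pi.single v 1) := by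
  have h1 : y + Pi.single v 1 - ZK = (y - ZK) + Pi.single v 1 := by abel
  rw [h1]
  simp only [Matrix.mulVec_add, dotProduct_add, add_dotProduct, sub_dotProduct]
  rw [Bsingle I v, hZK v, Bsymm I hsym (Pi.single v 1) y]
  ring

lemma chi_step_down (I : Matrix V V ℚ) (hsym : I.IsSymm) (ZK : V → ℚ)
    (hZK : ∀ v, ZK ⬝ᵥ I.mulVec (Pi.single v 1) = I v v + 2) (y : V → ℚ) (v : V) :
    -((y - Pi.single v 1 - ZK) ⬝ᵥ I.mulVec (y - Pi.single v 1)) / 2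
      = -((y - ZK) ⬝ᵥ I.mulVec y) / 2 - 1 + y ⬝ᵥ I.mulVec (Pi.single v 1) - I v v := by
  have h0 := chi_step I hsym ZK hZK (y - Pi.single v 1) v
  have h1 : y - Pi.single v 1 + Pi.single v 1 = y := by abel
  rw [h1] at h0
  have h2 : (y - Pi.single v 1) ⬝ᵥ I.mulVec (Pi.single v 1)
      = y ⬝ᵥ I.mulVec (Pi.single v 1) - I v v := by
    rw [sub_dotProduct, Bsingle I v]
  rw [h2] at h0
  linarith


set_option maxHeartbeats 1000000 in
lemma R3 (I : Matrix V V ℚ) (hsym : I.IsSymm)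
    (hIint : ∀ u v, ∃ k : ℤ, I u v = (k : ℚ))
    (hIoff : ∀ u v, u ≠ v → 0 ≤ I u v)
    (ZK : V → ℚ) (hZK : ∀ v, ZK ⬝ᵥ I.mulVec (Pi.single v 1) = I v v + 2)
    (v₀ : V) (mq : ℚ) (xm : V → ℚ)
    (hxm : IsLeast {y : V → ℚ | (∀ v, ∃ k : ℤ, y v = (k : ℚ)) ∧ y v₀ = mq ∧
      ∀ v, v ≠ v₀ → y ⬝ᵥ I.mulVec (Pi.single v 1) ≤ 0} xm)
    (z : V → ℚ) (hz : ∀ v, ∃ k : ℤ, z v = (k : ℚ)) (hz0 : z v₀ = mq) (hzle : z ≤ xm) :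
    -((xm - ZK) ⬝ᵥ I.mulVec xm) / 2 ≤ -((z - ZK) ⬝ᵥ I.mulVec z) / 2 := by
  obtain ⟨⟨hxint, hxnone, hxcon⟩, hxlb⟩ := hxm
  suffices H : ∀ n : ℕ, ∀ z : V → ℚ, (∀ v, ∃ k : ℤ, z v = (k : ℚ)) → z v₀ = mq → z ≤ xm →
      (∑ v, (xm v - z v)) = (n : ℚ) →
      -((xm - ZK) ⬝ᵥ I.mulVec xm) / 2 ≤ -((z - ZK) ⬝ᵥ I.mulVec z) / 2 by
    have hco : ∀ v, ∃ k : ℕ, xm v - z v = (k : ℚ) := by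
      intro v
      obtain ⟨k1, hk1⟩ := hxint v
      obtain ⟨k2, hk2⟩ := hz v
      have hle : (k2 : ℚ) ≤ (k1 : ℚ) := by rw [← hk1, ← hk2]; exact hzle v
      have : k2 ≤ k1 := by exact_mod_cast hle
      refine ⟨(k1 - k2).toNat, ?_⟩
      have h3 : ((k1 - k2).toNat : ℤ) = k1 - k2 := Int.toNat_of_nonneg (by omega)
      have h4 : ((k1 - k2).toNat : ℚ) = (k1 : ℚ) - (k2 : ℚ) := by exact_mod_cast h3
      rw [hk1, hk2, h4]
    choose f hf using hco
    refine H (∑ v, f v) z hz hz0 hzle ?_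
    rw [Finset.sum_congr rfl fun v _ => hf v]
    push_cast
    rfl
  intro n
  induction n using Nat.strong_induction_on with
  | _ n IH =>
    intro z hzint hz0 hzle hsum
    rcases eq_or_ne z xm with rfl | hne
    · exact le_refl _
    have hvex : ∃ v, z v < xm v ∧ 1 ≤ z ⬝ᵥ I.mulVec (Pi.single v 1) := by
      by_contra hcon
      push_neg at hcon
      have hzS : z ∈ {y : V → ℚ | (∀ v, ∃ k : ℤ, y v = (k : ℚ)) ∧ y v₀ = mq ∧
          ∀ v, v ≠ v₀ → y ⬝ᵥ I.mulVec (Pi.single v 1) ≤ 0} := by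
        refine ⟨hzint, hz0, ?_⟩
        intro v hv
        rcases lt_or_eq_of_le (hzle v) with hlt | heq
        · have h1 := hcon v hlt
          obtain ⟨K, hK⟩ := Bint I hIint z hzint v
          rw [hK] at h1 ⊢
          have : K < 1 := by exact_mod_cast h1
          exact_mod_cast (by omega : K ≤ 0)
        · have hcompare : z ⬝ᵥ I.mulVec (Pi.single v 1) ≤ xm ⬝ᵥ I.mulVec (Pi.single v 1) := by
            rw [Bdef, Bdef]
            apply Finset.sum_le_sum
            intro u _
            rcases eq_or_ne u v with rfl | huv
            · rw [heq]
            · exact mul_le_mul_of_nonneg_right (hzle u) (hIoff u v huv)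
          exact le_trans hcompare (hxcon v hv)
      exact hne (le_antisymm hzle (hxlb hzS))
    obtain ⟨v, hv1, hv2⟩ := hvex
    have hvnone : v ≠ v₀ := by
      intro h
      subst h
      rw [hz0, ← hxnone] at hv1
      exact lt_irrefl _ hv1
    obtain ⟨kz, hkz⟩ := hzint v
    obtain ⟨kx, hkx⟩ := hxint v
    have hklt : kz < kx := by exact_mod_cast (hkz ▸ hkx ▸ hv1)
    set z' := z + Pi.single v 1 with hz'def
    have hz'int : ∀ u, ∃ k : ℤ, z' u = (k : ℚ) := by
      intro u
      obtain ⟨k, hk⟩ := hzint u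
      rcases eq_or_ne u v with rfl | h
      · exact ⟨k + 1, by simp [hz'def, hk]⟩
      · exact ⟨k, by simp [hz'def, Pi.single_eq_of_ne h, hk]⟩
    have hz'0 : z' v₀ = mq := by
      simp [hz'def, Pi.single_eq_of_ne (Ne.symm hvnone), hz0]
    have hz'le : z' ≤ xm := by
      intro u
      rcases eq_or_ne u v with rfl | h
      · simp only [hz'def, Pi.add_apply, Pi.single_eq_same]
        rw [hkz, hkx]
        exact_mod_cast hklt
      · simp only [hz'def, Pi.add_apply, Pi.single_eq_of_ne h, add_zero]
        exact hzle u
    have htermnn : ∀ u : V, u ∈ Finset.univ → 0 ≤ xm u - z u := by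
      intro u _
      have := hzle u
      linarith
    have hn1 : 1 ≤ n := by
      have hsingle : xm v - z v ≤ ∑ u, (xm u - z u) :=
        Finset.single_le_sum htermnn (Finset.mem_univ v)
      have h1 : (1 : ℚ) ≤ xm v - z v := by
        rw [hkz, hkx]
        have : (kz : ℚ) + 1 ≤ kx := by exact_mod_cast hklt
        linarith
      have : (1 : ℚ) ≤ (n : ℚ) := by rw [← hsum]; linarith
      exact_mod_cast this
    have hsum' : ∑ u, (xm u - z' u) = ((n - 1 : ℕ) : ℚ) := by
      have hexp : ∀ u : V, xm u - z' u = (xm u - z u) - (Pi.single v 1 : V → ℚ) u := by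
        intro u
        simp [hz'def]
        ring
      rw [Finset.sum_congr rfl fun u _ => hexp u, Finset.sum_sub_distrib]
      have hps : ∑ u, (Pi.single v 1 : V → ℚ) u = 1 := by
        rw [Finset.sum_eq_single v]
        · simp
        · intro u _ hu; simp [Pi.single_eq_of_ne hu]
        · intro h; exact absurd (Finset.mem_univ v) h
      rw [hps, hsum]
      push_cast [Nat.cast_sub hn1]
      ring
    have hstep := chi_step I hsym ZK hZK z v
    have hIH := IH (n - 1) (by omega) z' hz'int hz'0 hz'le hsum'
    rw [← hz'def] at hstep
    rw [hstep] at hIH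
    linarith

set_option maxHeartbeats 1000000 in
lemma R4 (I : Matrix V V ℚ) (hsym : I.IsSymm)
    (hIint : ∀ u v, ∃ k : ℤ, I u v = (k : ℚ))
    (hIoff : ∀ u v, u ≠ v → 0 ≤ I u v)
    (ZK : V → ℚ) (hZK : ∀ v, ZK ⬝ᵥ I.mulVec (Pi.single v 1) = I v v + 2)
    (v₀ : V) (mq : ℚ) (xb : V → ℚ)
    (hxb : IsGreatest {y : V → ℚ | (∀ v, ∃ k : ℤ, y v = (k : ℚ)) ∧ y v₀ = mq ∧
      ∀ v, v ≠ v₀ → I v v + 2 ≤ y ⬝ᵥ I.mulVec (Pi.single v 1)} xb)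
    (z : V → ℚ) (hz : ∀ v, ∃ k : ℤ, z v = (k : ℚ)) (hz0 : z v₀ = mq) (hzge : xb ≤ z) :
    -((xb - ZK) ⬝ᵥ I.mulVec xb) / 2 ≤ -((z - ZK) ⬝ᵥ I.mulVec z) / 2 := by
  obtain ⟨⟨hxint, hxnone, hxcon⟩, hxub⟩ := hxb
  suffices H : ∀ n : ℕ, ∀ z : V → ℚ, (∀ v, ∃ k : ℤ, z v = (k : ℚ)) → z v₀ = mq → xb ≤ z →
      (∑ v, (z v - xb v)) = (n : ℚ) →
      -((xb - ZK) ⬝ᵥ I.mulVec xb) / 2 ≤ -((z - ZK) ⬝ᵥ I.mulVec z) / 2 by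
    have hco : ∀ v, ∃ k : ℕ, z v - xb v = (k : ℚ) := by
      intro v
      obtain ⟨k1, hk1⟩ := hz v
      obtain ⟨k2, hk2⟩ := hxint v
      have hle : (k2 : ℚ) ≤ (k1 : ℚ) := by rw [← hk1, ← hk2]; exact hzge v
      have : k2 ≤ k1 := by exact_mod_cast hle
      refine ⟨(k1 - k2).toNat, ?_⟩
      have h3 : ((k1 - k2).toNat : ℤ) = k1 - k2 := Int.toNat_of_nonneg (by omega)
      have h4 : ((k1 - k2).toNat : ℚ) = (k1 : ℚ) - (k2 : ℚ) := by exact_mod_cast h3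
      rw [hk1, hk2, h4]
    choose f hf using hco
    refine H (∑ v, f v) z hz hz0 hzge ?_
    rw [Finset.sum_congr rfl fun v _ => hf v]
    push_cast
    rfl
  intro n
  induction n using Nat.strong_induction_on with
  | _ n IH =>
    intro z hzint hz0 hzge hsum
    rcases eq_or_ne z xb with rfl | hne
    · exact le_refl _
    have hvex : ∃ v, xb v < z v ∧ z ⬝ᵥ I.mulVec (Pi.single v 1) ≤ I v v + 1 := by
      by_contra hcon
      push_neg at hcon
      have hzG : z ∈ {y : V → ℚ | (∀ v, ∃ k : ℤ, y v = (k : ℚ)) ∧ y v₀ = mq ∧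
          ∀ v, v ≠ v₀ → I v v + 2 ≤ y ⬝ᵥ I.mulVec (Pi.single v 1)} := by
        refine ⟨hzint, hz0, ?_⟩
        intro v hv
        rcases lt_or_eq_of_le (hzge v) with hlt | heq
        · have h1 := hcon v hlt
          obtain ⟨K, hK⟩ := Bint I hIint z hzint v
          obtain ⟨D, hD⟩ := hIint v v
          rw [hK, hD] at h1 ⊢
          have : (D : ℚ) + 1 < K := by exact_mod_cast h1
          have h2 : D + 1 < K := by exact_mod_cast this
          have h3 : D + 2 ≤ K := by omega
          exact_mod_cast h3
        · have hcompare : xb ⬝ᵥ I.mulVec (Pi.single v 1) ≤ z ⬝ᵥ I.mulVec (Pi.single v 1) := by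
            rw [Bdef, Bdef]
            apply Finset.sum_le_sum
            intro u _
            rcases eq_or_ne u v with rfl | huv
            · rw [heq]
            · exact mul_le_mul_of_nonneg_right (hzge u) (hIoff u v huv)
          exact le_trans (hxcon v hv) hcompare
      exact hne (le_antisymm (hxub hzG) hzge)
    obtain ⟨v, hv1, hv2⟩ := hvex
    have hvnone : v ≠ v₀ := by
      intro h
      subst h
      rw [hz0, ← hxnone] at hv1
      exact lt_irrefl _ hv1
    obtain ⟨kz, hkz⟩ := hzint v
    obtain ⟨kx, hkx⟩ := hxint v
    have hklt : kx < kz := by exact_mod_cast (hkz ▸ hkx ▸ hv1)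
    set z' := z - Pi.single v 1 with hz'def
    have hz'int : ∀ u, ∃ k : ℤ, z' u = (k : ℚ) := by
      intro u
      obtain ⟨k, hk⟩ := hzint u
      rcases eq_or_ne u v with rfl | h
      · exact ⟨k - 1, by simp [hz'def, hk]⟩
      · exact ⟨k, by simp [hz'def, Pi.single_eq_of_ne h, hk]⟩
    have hz'0 : z' v₀ = mq := by
      simp [hz'def, Pi.single_eq_of_ne (Ne.symm hvnone), hz0]
    have hz'ge : xb ≤ z' := by
      intro u
      rcases eq_or_ne u v with rfl | h
      · simp only [hz'def, Pi.sub_apply, Pi.single_eq_same]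
        rw [hkz, hkx]
        have : kx ≤ kz - 1 := by omega
        have h2 : (kx : ℚ) ≤ ((kz - 1 : ℤ) : ℚ) := by exact_mod_cast this
        push_cast at h2 ⊢
        linarith
      · simp only [hz'def, Pi.sub_apply, Pi.single_eq_of_ne h, sub_zero]
        exact hzge u
    have hn1 : 1 ≤ n := by
      have htermnn : ∀ u : V, u ∈ Finset.univ → 0 ≤ z u - xb u := by
        intro u _
        have := hzge u
        linarith
      have hsingle : z v - xb v ≤ ∑ u, (z u - xb u) :=
        Finset.single_le_sum htermnn (Finset.mem_univ v)
      have h1 : (1 : ℚ) ≤ z v - xb v := by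
        rw [hkz, hkx]
        have : (kx : ℚ) + 1 ≤ kz := by exact_mod_cast hklt
        linarith
      have : (1 : ℚ) ≤ (n : ℚ) := by rw [← hsum]; linarith
      exact_mod_cast this
    have hsum' : ∑ u, (z' u - xb u) = ((n - 1 : ℕ) : ℚ) := by
      have hexp : ∀ u : V, z' u - xb u = (z u - xb u) - (Pi.single v 1 : V → ℚ) u := by
        intro u
        simp [hz'def]
        ring
      rw [Finset.sum_congr rfl fun u _ => hexp u, Finset.sum_sub_distrib]
      have hps : ∑ u, (Pi.single v 1 : V → ℚ) u = 1 := by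
        rw [Finset.sum_eq_single v]
        · simp
        · intro u _ hu; simp [Pi.single_eq_of_ne hu]
        · intro h; exact absurd (Finset.mem_univ v) h
      rw [hps, hsum]
      push_cast [Nat.cast_sub hn1]
      ring
    have hstep := chi_step_down I hsym ZK hZK z v
    have hIH := IH (n - 1) (by omega) z' hz'int hz'0 hz'ge hsum'
    rw [← hz'def] at hstep
    rw [hstep] at hIH
    linarith

end Abstract


lemma finSumIte {n : ℕ} (f : Fin n → ℚ) (t : ℕ) :
    (∑ j : Fin n, if (j : ℕ) = t then f j else 0) = if h : t < n then f ⟨t, h⟩ else 0 := by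
  split
  case isTrue h =>
    rw [Finset.sum_eq_single ⟨t, h⟩]
    · simp
    · intro u _ hu
      rw [if_neg]
      intro hc
      exact hu (Fin.ext hc)
    · intro hmem
      exact absurd (Finset.mem_univ _) hmem
  case isFalse h =>
    apply Finset.sum_eq_zero
    intro j _
    rw [if_neg]
    intro hc
    exact h (hc ▸ j.isLt)

section Star

variable {d : ℕ} {ν : Fin d → ℕ}

/-- leg read-out of a vector, with `t = 0` the central vertex -/
def Ybar (ν : Fin d → ℕ) (y : Option ((i : Fin d) × Fin (ν i)) → ℚ) (i : Fin d) (t : ℕ) : ℚ :=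
  if t = 0 then y none else if h : t - 1 < ν i then y (some ⟨i, ⟨t - 1, h⟩⟩) else 0

variable (b : (i : Fin d) → Fin (ν i) → ℤ)
    (I : Matrix (Option ((i : Fin d) × Fin (ν i))) (Option ((i : Fin d) × Fin (ν i))) ℚ)
    (hsym : I.IsSymm)

lemma Bdef' (y : Option ((i : Fin d) × Fin (ν i)) → ℚ) (v) :
    y ⬝ᵥ I.mulVec (Pi.single v 1) = ∑ u, y u * I u v := by
  rw [Matrix.mulVec_single_one]
  simp only [dotProduct, Matrix.col_apply]

include hsym in
lemma Bnone (b₀ : ℤ) (hν : ∀ i, 0 < ν i)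
    (hI00 : I none none = -(b₀ : ℚ))
    (hI0leg : ∀ i (j : Fin (ν i)), I none (some ⟨i, j⟩) = if (j : ℕ) = 0 then 1 else 0)
    (y : Option ((i : Fin d) × Fin (ν i)) → ℚ) :
    y ⬝ᵥ I.mulVec (Pi.single none 1) = -(b₀ : ℚ) * y none + ∑ i, Ybar ν y i 1 := by
  rw [Bdef']
  rw [Fintype.sum_option]
  rw [hI00]
  have hsig : ∑ u : (i : Fin d) × Fin (ν i), y (some u) * I (some u) none
      = ∑ i, ∑ j : Fin (ν i), y (some ⟨i, j⟩) * I (some ⟨i, j⟩) none := by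
    rw [← Finset.univ_sigma_univ, Finset.sum_sigma]
  rw [hsig]
  have hione : ∀ i, ∑ j : Fin (ν i), y (some ⟨i, j⟩) * I (some ⟨i, j⟩) none = Ybar ν y i 1 := by
    intro i
    have hent : ∀ j : Fin (ν i), y (some ⟨i, j⟩) * I (some ⟨i, j⟩) none
        = if ((j : ℕ)) = 0 then y (some ⟨i, j⟩) else 0 := by
      intro j
      rw [hsym.apply, hI0leg i j]
      split <;> simp
    rw [Finset.sum_congr rfl fun j _ => hent j, finSumIte (fun j => y (some ⟨i, j⟩)) 0,
      dif_pos (hν i), Ybar]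
    norm_num
    intro h
    exact absurd h (Nat.pos_iff_ne_zero.mp (hν i))
  rw [Finset.sum_congr rfl fun i _ => hione i]
  ring

include hsym in
lemma Bleg (hIdiag : ∀ i j, I (some ⟨i, j⟩) (some ⟨i, j⟩) = -((b i j : ℤ) : ℚ))
    (hI0leg : ∀ i (j : Fin (ν i)), I none (some ⟨i, j⟩) = if (j : ℕ) = 0 then 1 else 0)
    (hIleg : ∀ i (j j' : Fin (ν i)), j ≠ j' →
      I (some ⟨i, j⟩) (some ⟨i, j'⟩) =
        if (j : ℕ) + 1 = (j' : ℕ) ∨ (j' : ℕ) + 1 = (j : ℕ) then 1 else 0)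
    (hIcross : ∀ i i', i ≠ i' → ∀ (j : Fin (ν i)) (j' : Fin (ν i')),
      I (some ⟨i, j⟩) (some ⟨i', j'⟩) = 0)
    (y : Option ((i : Fin d) × Fin (ν i)) → ℚ) (i : Fin d) (j : Fin (ν i)) :
    y ⬝ᵥ I.mulVec (Pi.single (some ⟨i, j⟩) 1)
      = Ybar ν y i (j : ℕ) - ((b i j : ℤ) : ℚ) * Ybar ν y i ((j : ℕ) + 1)
        + Ybar ν y i ((j : ℕ) + 2) := by
  rw [Bdef']
  rw [Fintype.sum_option]
  have hsig : ∑ u : (i' : Fin d) × Fin (ν i'), y (some u) * I (some u) (some ⟨i, j⟩)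
      = ∑ i', ∑ j' : Fin (ν i'), y (some ⟨i', j'⟩) * I (some ⟨i', j'⟩) (some ⟨i, j⟩) := by
    rw [← Finset.univ_sigma_univ, Finset.sum_sigma]
  rw [hsig]
  rw [Finset.sum_eq_single i (fun i' _ hne => Finset.sum_eq_zero fun j' _ => by
      rw [hIcross i' i hne j' j, mul_zero])
    (fun hmem => absurd (Finset.mem_univ _) hmem)]
  have hent : ∀ j' : Fin (ν i), y (some ⟨i, j'⟩) * I (some ⟨i, j'⟩) (some ⟨i, j⟩)
      = (if j' = j then -((b i j : ℤ) : ℚ) * y (some ⟨i, j'⟩) else 0)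
        + (if ((j' : ℕ)) = (j : ℕ) + 1 then y (some ⟨i, j'⟩) else 0)
        + (if ((j' : ℕ)) + 1 = (j : ℕ) then y (some ⟨i, j'⟩) else 0) := by
    intro j'
    rcases eq_or_ne j' j with rfl | hne
    · rw [hIdiag i j']
      rw [if_pos rfl, if_neg (by omega), if_neg (by omega)]
      ring
    · rw [hIleg i j' j hne, if_neg hne]
      have hne' : (j' : ℕ) ≠ (j : ℕ) := fun hc => hne (Fin.ext hc)
      by_cases h1 : ((j' : ℕ)) + 1 = (j : ℕ) <;> by_cases h2 : ((j' : ℕ)) = (j : ℕ) + 1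
      · omega
      · rw [if_pos (Or.inl h1), if_pos h1, if_neg h2]
        ring
      · rw [if_pos (Or.inr (by omega)), if_pos h2, if_neg h1]
        ring
      · rw [if_neg (by omega), if_neg h1, if_neg h2]
        ring
  rw [Finset.sum_congr rfl fun j' _ => hent j']
  rw [Finset.sum_add_distrib, Finset.sum_add_distrib]
  have hS1 : (∑ j' : Fin (ν i), if j' = j then -((b i j : ℤ) : ℚ) * y (some ⟨i, j'⟩) else 0)
      = -((b i j : ℤ) : ℚ) * y (some ⟨i, j⟩) := by
    rw [Finset.sum_ite_eq' Finset.univ j]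
    simp
  have hS2 : (∑ j' : Fin (ν i), if ((j' : ℕ)) = (j : ℕ) + 1 then y (some ⟨i, j'⟩) else 0)
      = Ybar ν y i ((j : ℕ) + 2) := by
    rw [finSumIte (fun j' => y (some ⟨i, j'⟩)) ((j : ℕ) + 1)]
    rw [Ybar, if_neg (by omega)]
    norm_num
  have hS3 : y none * I none (some ⟨i, j⟩)
      + (∑ j' : Fin (ν i), if ((j' : ℕ)) + 1 = (j : ℕ) then y (some ⟨i, j'⟩) else 0)
      = Ybar ν y i (j : ℕ) := by
    rw [hI0leg i j]
    by_cases hj0 : (j : ℕ) = 0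
    · rw [if_pos hj0]
      have : (∑ j' : Fin (ν i), if ((j' : ℕ)) + 1 = (j : ℕ) then y (some ⟨i, j'⟩) else 0) = 0 :=
        Finset.sum_eq_zero fun j' _ => if_neg (by omega)
      rw [this, Ybar, if_pos hj0]
      ring
    · rw [if_neg hj0]
      have hcond : ∀ j' : Fin (ν i), (((j' : ℕ)) + 1 = (j : ℕ)) = (((j' : ℕ)) = (j : ℕ) - 1) := by
        intro j'
        apply propext
        omega
      have hlt : (j : ℕ) - 1 < ν i := by omega
      have hsum2 : (∑ j' : Fin (ν i), if ((j' : ℕ)) + 1 = (j : ℕ) then y (some ⟨i, j'⟩) else 0)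
          = ∑ j' : Fin (ν i), if ((j' : ℕ)) = (j : ℕ) - 1 then y (some ⟨i, j'⟩) else 0 :=
        Finset.sum_congr rfl fun j' _ => by simp only [hcond j']
      rw [hsum2, finSumIte (fun j' => y (some ⟨i, j'⟩)) ((j : ℕ) - 1), dif_pos hlt, Ybar,
        if_neg hj0, dif_pos hlt]
      ring
  rw [hS1, hS2]
  have hgoal : y none * I none (some ⟨i, j⟩)
      + (-((b i j : ℤ) : ℚ) * y (some ⟨i, j⟩)
        + Ybar ν y i ((j : ℕ) + 2)
        + (∑ j' : Fin (ν i), if ((j' : ℕ)) + 1 = (j : ℕ) then y (some ⟨i, j'⟩) else 0))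
      = Ybar ν y i (j : ℕ) - ((b i j : ℤ) : ℚ) * Ybar ν y i ((j : ℕ) + 1)
        + Ybar ν y i ((j : ℕ) + 2) := by
    have hYj1 : Ybar ν y i ((j : ℕ) + 1) = y (some ⟨i, j⟩) := by
      rw [Ybar, if_neg (by omega), dif_pos (by simpa using j.isLt)]
      congr
    rw [hYj1, ← hS3]
    ring
  linarith [hgoal]

end Star


/-- the candidate greatest element of `G(m)` -/
def WWfun (d : ℕ) (ν : Fin d → ℕ) (b : (i : Fin d) → Fin (ν i) → ℤ) (m : ℤ) :
    Option ((i : Fin d) × Fin (ν i)) → ℚ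
  | none => (m : ℚ)
  | some p => ((legwp (ν p.1) (legN (List.ofFn (b p.1))) m ((p.2 : ℕ) + 1) : ℤ) : ℚ)

def blf (d : ℕ) (ν : Fin d → ℕ) (b : (i : Fin d) → Fin (ν i) → ℤ) (i : Fin d) (k : ℕ) : ℤ :=
  if h : k < ν i then b i ⟨k, h⟩ else 0

/-- Duality for the minimal cycles with prescribed `v₀`-coordinate:
(a) `χ(x*(ℓ)) = χ(x(Δ−ℓ))` for `0 ≤ ℓ ≤ Δ`;
(b) `N(ℓ) + N*(Δ−1−ℓ) = −2` for `0 ≤ ℓ ≤ Δ−1`. -/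
theorem stmt_14
    (d : ℕ) (hd : 3 ≤ d) (b₀ : ℤ)
    (α ω : Fin d → ℤ)
    (hω : ∀ i, 0 < ω i ∧ ω i < α i)
    (hcop : ∀ i, IsCoprime (α i) (ω i))
    (e : ℚ) (he : e = -(b₀ : ℚ) + ∑ i, (ω i : ℚ) / (α i : ℚ)) (heneg : e < 0)
    -- the legs: negative continued fraction expansions αᵢ/ωᵢ = [b_{i1},…,b_{iνᵢ}]
    (ν : Fin d → ℕ) (hν : ∀ i, 0 < ν i)
    (b : (i : Fin d) → Fin (ν i) → ℤ) (hb : ∀ i j, 2 ≤ b i j)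
    (hcf : ∀ i, ncf (List.ofFn fun j => ((b i j : ℤ) : ℚ)) = (α i : ℚ) / (ω i : ℚ))
    -- the intersection matrix of the star-shaped plumbing graph
    (I : Matrix (Option ((i : Fin d) × Fin (ν i))) (Option ((i : Fin d) × Fin (ν i))) ℚ)
    (hsym : I.IsSymm)
    (hI00 : I none none = -(b₀ : ℚ))
    (hIdiag : ∀ i j, I (some ⟨i, j⟩) (some ⟨i, j⟩) = -((b i j : ℤ) : ℚ))
    (hI0leg : ∀ i (j : Fin (ν i)),
      I none (some ⟨i, j⟩) = if (j : ℕ) = 0 then 1 else 0)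
    (hIleg : ∀ i (j j' : Fin (ν i)), j ≠ j' →
      I (some ⟨i, j⟩) (some ⟨i, j'⟩) =
        if (j : ℕ) + 1 = (j' : ℕ) ∨ (j' : ℕ) + 1 = (j : ℕ) then 1 else 0)
    (hIcross : ∀ i i', i ≠ i' → ∀ (j : Fin (ν i)) (j' : Fin (ν i')),
      I (some ⟨i, j⟩) (some ⟨i', j'⟩) = 0)
    (hnegdef : ∀ x : Option ((i : Fin d) × Fin (ν i)) → ℚ, x ≠ 0 → x ⬝ᵥ I.mulVec x < 0)
    -- the anticanonical cycle
    (ZK : Option ((i : Fin d) × Fin (ν i)) → ℚ)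
    (hZK : ∀ v, ZK ⬝ᵥ I.mulVec (Pi.single v 1) = I v v + 2)
    -- the representative r* ∈ [0,1)^𝒱 of the class of Z_K, and Δ
    (rs : Option ((i : Fin d) × Fin (ν i)) → ℚ)
    (hrs1 : ∀ v, 0 ≤ rs v ∧ rs v < 1)
    (hrs2 : ∀ v, ∃ k : ℤ, ZK v - rs v = (k : ℚ))
    (Δ : ℤ) (hΔ : (Δ : ℚ) = ZK none - rs none)
    -- the minimal cycles x(ℓ) (class h = 0) and x*(ℓ) (class of Z_K)
    (x xs : ℤ → Option ((i : Fin d) × Fin (ν i)) → ℚ)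
    (hx : ∀ ℓ : ℤ, 0 ≤ ℓ → IsLeast
      {y | (∀ v, ∃ k : ℤ, y v = (k : ℚ)) ∧ y none = (ℓ : ℚ) ∧
        ∀ v, v ≠ none → y ⬝ᵥ I.mulVec (Pi.single v 1) ≤ 0} (x ℓ))
    (hxs : ∀ ℓ : ℤ, 0 ≤ ℓ → IsLeast
      {y | (∀ v, ∃ k : ℤ, y v - rs v = (k : ℚ)) ∧ y none = rs none + (ℓ : ℚ) ∧
        ∀ v, v ≠ none → y ⬝ᵥ I.mulVec (Pi.single v 1) ≤ 0} (xs ℓ))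
    -- the quasi-linear function N
    (N : ℤ → ℤ)
    (hN : ∀ ℓ : ℤ, N ℓ = b₀ * ℓ - ∑ i, ⌈((ℓ * ω i : ℤ) : ℚ) / ((α i : ℤ) : ℚ)⌉) :
    -- (a) duality for χ(y) = −(y − Z_K, y)/2
    (∀ ℓ : ℤ, 0 ≤ ℓ → ℓ ≤ Δ →
      -((xs ℓ - ZK) ⬝ᵥ I.mulVec (xs ℓ)) / 2 =
      -((x (Δ - ℓ) - ZK) ⬝ᵥ I.mulVec (x (Δ - ℓ))) / 2)
    -- (b) N(ℓ) + N*(Δ − 1 − ℓ) = −2, with N*(ℓ) = −(x*(ℓ), E_{v₀})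
    ∧ (∀ ℓ : ℤ, 0 ≤ ℓ → ℓ ≤ Δ - 1 →
      (N ℓ : ℚ) + (-(xs (Δ - 1 - ℓ) ⬝ᵥ I.mulVec (Pi.single none 1))) = -2) := by
  classical
  have hαpos : ∀ i, 0 < α i := fun i => lt_trans (hω i).1 (hω i).2
  have hlen : ∀ i, (List.ofFn (b i)).length = ν i := fun i => List.length_ofFn
  have hmem2 : ∀ i, ∀ z ∈ List.ofFn (b i), 2 ≤ z := by
    intro i z hz
    obtain ⟨j, hj⟩ := List.mem_ofFn.mp hz
    rw [← hj]; exact hb i j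
  -- identification of cfPair with (α, ω)
  have hid : ∀ i, (cfPair (List.ofFn (b i))).1 = α i ∧ (cfPair (List.ofFn (b i))).2 = ω i := by
    intro i
    obtain ⟨h1, h2, h3, h4⟩ := cf_spec (List.ofFn (b i)) (hmem2 i)
    have hmap : (List.ofFn (b i)).map (Int.cast : ℤ → ℚ)
        = List.ofFn fun j => ((b i j : ℤ) : ℚ) := by
      rw [List.map_ofFn]; rfl
    rw [hmap, hcf i] at h4
    set n := (cfPair (List.ofFn (b i))).1 with hndef
    set dd := (cfPair (List.ofFn (b i))).2 with hdddef
    have hωpos := (hω i).1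
    have hαp := hαpos i
    have hωQ : ((ω i : ℤ) : ℚ) ≠ 0 := by
      have : (0 : ℚ) < ((ω i : ℤ) : ℚ) := by exact_mod_cast hωpos
      linarith
    have hαQ : ((α i : ℤ) : ℚ) ≠ 0 := by
      have : (0 : ℚ) < ((α i : ℤ) : ℚ) := by exact_mod_cast hαp
      linarith
    have hnpos : 0 < n := lt_of_le_of_lt h1 h2
    have hnQ : ((n : ℤ) : ℚ) ≠ 0 := by
      have : (0 : ℚ) < ((n : ℤ) : ℚ) := by exact_mod_cast hnpos
      linarith
    have hddpos : 0 < dd := by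
      rcases eq_or_lt_of_le h1 with h0 | h0
      · exfalso
        rw [← h0, Int.cast_zero, div_zero] at h4
        rw [div_eq_zero_iff] at h4
        rcases h4 with h4 | h4
        · exact hαQ h4
        · exact hωQ h4
      · exact h0
    have hddQ : ((dd : ℤ) : ℚ) ≠ 0 := by
      have : (0 : ℚ) < ((dd : ℤ) : ℚ) := by exact_mod_cast hddpos
      linarith
    have hcross : α i * dd = n * ω i := by
      rw [div_eq_div_iff hωQ hddQ] at h4
      exact_mod_cast h4
    have hndvd : n ∣ α i := by
      have hd1 : n ∣ n * ω i := Dvd.intro _ rfl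
      rw [← hcross] at hd1
      rw [mul_comm] at hd1
      exact h3.dvd_of_dvd_mul_left hd1
    have hαdvd : α i ∣ n := by
      have hd1 : α i ∣ α i * dd := Dvd.intro _ rfl
      rw [hcross] at hd1
      exact (hcop i).dvd_of_dvd_mul_right hd1
    have hn : n = α i := Int.dvd_antisymm (le_of_lt hnpos) (le_of_lt hαp) hndvd hαdvd
    have hdd : dd = ω i := by
      have h5 := hcross
      rw [hn] at h5
      exact mul_left_cancel₀ (ne_of_gt hαp) h5
    exact ⟨hn, hdd⟩
  -- leg interface facts
  have hNν : ∀ i, legN (List.ofFn (b i)) (ν i) = 1 := fun i => by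
    have h := legN_len (List.ofFn (b i)); rwa [hlen i] at h
  have hNν1 : ∀ i, legN (List.ofFn (b i)) (ν i + 1) = 0 := fun i => by
    have h := legN_len1 (List.ofFn (b i)); rwa [hlen i] at h
  have hb2 : ∀ i, ∀ k < ν i, 2 ≤ blf d ν b i k := by
    intro i k hk
    rw [blf, dif_pos hk]
    exact hb i ⟨k, hk⟩
  have hNrec : ∀ i, ∀ k < ν i, legN (List.ofFn (b i)) k
      = blf d ν b i k * legN (List.ofFn (b i)) (k + 1) - legN (List.ofFn (b i)) (k + 2) := by
    intro i k hk
    have hk' : k < (List.ofFn (b i)).length := by rw [hlen i]; exact hk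
    rw [legN_rec (List.ofFn (b i)) k hk']
    congr 1
    congr 1
    rw [List.getElem_ofFn, blf, dif_pos hk]
  have hN0 : ∀ i, legN (List.ofFn (b i)) 0 = α i := fun i => by
    rw [legN_fst]; exact (hid i).1
  have hN1 : ∀ i, legN (List.ofFn (b i)) 1 = ω i := fun i => by
    rw [legN_snd _ (by rw [hlen i]; exact hν i)]; exact (hid i).2
  -- matrix entry facts
  have hsymm' : ∀ u v, I u v = I v u := fun u v => hsym.apply v u
  have hIint : ∀ u v, ∃ k : ℤ, I u v = (k : ℚ) := by
    have hkey : ∀ (i : Fin d) (j : Fin (ν i)), ∃ k : ℤ, I none (some ⟨i, j⟩) = (k : ℚ) := by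
      intro i j
      by_cases hc : (j : ℕ) = 0
      · exact ⟨1, by rw [hI0leg i j, if_pos hc]; norm_num⟩
      · exact ⟨0, by rw [hI0leg i j, if_neg hc]; norm_num⟩
    intro u v
    rcases u with _ | ⟨i, j⟩ <;> rcases v with _ | ⟨i', j'⟩
    · exact ⟨-b₀, by rw [hI00]; push_cast; ring⟩
    · exact hkey i' j'
    · obtain ⟨k, hk⟩ := hkey i j
      exact ⟨k, by rw [hsymm', hk]⟩
    · rcases eq_or_ne i i' with rfl | hne
      · rcases eq_or_ne j j' with rfl | hnej
        · exact ⟨-(b i j), by rw [hIdiag i j]; push_cast; ring⟩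
        · by_cases hc : (j : ℕ) + 1 = (j' : ℕ) ∨ (j' : ℕ) + 1 = (j : ℕ)
          · exact ⟨1, by rw [hIleg i j j' hnej, if_pos hc]; norm_num⟩
          · exact ⟨0, by rw [hIleg i j j' hnej, if_neg hc]; norm_num⟩
      · exact ⟨0, by rw [hIcross i i' hne]; norm_num⟩
  have hIoff : ∀ u v, u ≠ v → 0 ≤ I u v := by
    have hkey : ∀ (i : Fin d) (j : Fin (ν i)), 0 ≤ I none (some ⟨i, j⟩) := by
      intro i j
      rw [hI0leg i j]
      split <;> norm_num
    intro u v huv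
    rcases u with _ | ⟨i, j⟩ <;> rcases v with _ | ⟨i', j'⟩
    · exact absurd rfl huv
    · exact hkey i' j'
    · rw [hsymm']
      exact hkey i j
    · rcases eq_or_ne i i' with rfl | hne
      · rcases eq_or_ne j j' with rfl | hnej
        · exact absurd rfl huv
        · rw [hIleg i j j' hnej]
          split <;> norm_num
      · rw [hIcross i i' hne]
  -- Ybar values of the candidate W
  have hYbW : ∀ (m : ℤ) (i : Fin d) (t : ℕ), t ≤ ν i + 1 →
      Ybar ν (WWfun d ν b m) i t
        = ((legwp (ν i) (legN (List.ofFn (b i))) m t : ℤ) : ℚ) := by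
    intro m i t ht
    match t with
    | 0 =>
      rw [Ybar, if_pos rfl]
      rw [show WWfun d ν b m none = (m : ℚ) from rfl]
      rw [legwp, if_pos (Nat.zero_le _)]
      rfl
    | Nat.succ s =>
      rw [Ybar, if_neg (Nat.succ_ne_zero s)]
      simp only [Nat.succ_sub_one]
      by_cases h : s < ν i
      · rw [dif_pos h]
        rfl
      · rw [dif_neg h]
        have hs : Nat.succ s = ν i + 1 := by omega
        rw [hs, legwp, if_neg (by omega)]
        norm_num
  -- membership of W in the G-type set
  have hWcon : ∀ (m : ℤ) v, v ≠ none →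
      I v v + 2 ≤ WWfun d ν b m ⬝ᵥ I.mulVec (Pi.single v 1) := by
    intro m v hv
    rcases v with _ | ⟨i, j⟩
    · exact absurd rfl hv
    rw [Bleg b I hsym hIdiag hI0leg hIleg hIcross (WWfun d ν b m) i j, hIdiag i j]
    rw [hYbW m i (j : ℕ) (by omega), hYbW m i ((j : ℕ) + 1) (by have := j.isLt; omega),
      hYbW m i ((j : ℕ) + 2) (by have := j.isLt; omega)]
    have hcon := leg_constraint (ν i) (blf d ν b i) (legN (List.ofFn (b i)))
      (hNrec i) (hb2 i) (hNν i) (hNν1 i) m (j : ℕ) j.isLt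
    have hbeq : blf d ν b i (j : ℕ) = b i j := by
      rw [blf, dif_pos j.isLt]
    rw [hbeq] at hcon
    have hconQ : (2 : ℚ) - ((b i j : ℤ) : ℚ)
        ≤ ((legwp (ν i) (legN (List.ofFn (b i))) m (j : ℕ) : ℤ) : ℚ)
          - ((b i j : ℤ) : ℚ) * ((legwp (ν i) (legN (List.ofFn (b i))) m ((j : ℕ) + 1) : ℤ) : ℚ)
          + ((legwp (ν i) (legN (List.ofFn (b i))) m ((j : ℕ) + 2) : ℤ) : ℚ) := by
      exact_mod_cast hcon
    linarith
  have hWint : ∀ (m : ℤ) u, ∃ k : ℤ, WWfun d ν b m u = (k : ℚ) := by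
    intro m u
    rcases u with _ | ⟨i, j⟩
    · exact ⟨m, rfl⟩
    · exact ⟨legwp (ν i) (legN (List.ofFn (b i))) m ((j : ℕ) + 1), rfl⟩
  -- W is an upper bound for the G-type set and a lower bound for the S-type set
  have hWub : ∀ (m : ℤ) (z : Option ((i : Fin d) × Fin (ν i)) → ℚ),
      (∀ u, ∃ k : ℤ, z u = (k : ℚ)) → z none = ((m : ℤ) : ℚ) →
      (∀ v, v ≠ none → I v v + 2 ≤ z ⬝ᵥ I.mulVec (Pi.single v 1)) → z ≤ WWfun d ν b m := by
    intro m z hzint hznone hzcon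
    choose f hf using hzint
    intro u
    rcases u with _ | ⟨i, j⟩
    · rw [hznone]
      exact le_of_eq rfl
    · set Zi : ℕ → ℤ := fun t => if t = 0 then f none
        else if h : t - 1 < ν i then f (some ⟨i, ⟨t - 1, h⟩⟩) else 0 with hZidef
      have hYZ : ∀ t, ((Zi t : ℤ) : ℚ) = Ybar ν z i t := by
        intro t
        simp only [hZidef, Ybar]
        by_cases h0 : t = 0
        · rw [if_pos h0, if_pos h0, ← hf none]
        · rw [if_neg h0, if_neg h0]
          by_cases h1 : t - 1 < ν i
          · rw [dif_pos h1, dif_pos h1, ← hf _]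
          · rw [dif_neg h1, dif_neg h1]
            norm_num
      have hZ0 : Zi 0 = m := by
        have h5 : ((f none : ℤ) : ℚ) = ((m : ℤ) : ℚ) := by rw [← hf none, hznone]
        have h6 : f none = m := by exact_mod_cast h5
        simp only [hZidef]
        simpa using h6
      have hZtop : Zi (ν i + 1) = 0 := by
        simp only [hZidef]
        rw [if_neg (by omega), dif_neg (by omega)]
      have hZc : ∀ k, k < ν i → 2 - blf d ν b i k
          ≤ Zi k - blf d ν b i k * Zi (k + 1) + Zi (k + 2) := by
        intro k hk
        have hcz := hzcon (some ⟨i, ⟨k, hk⟩⟩) (by simp)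
        rw [Bleg b I hsym hIdiag hI0leg hIleg hIcross z i ⟨k, hk⟩, hIdiag i ⟨k, hk⟩] at hcz
        simp only [Fin.val_mk] at hcz
        rw [← hYZ k, ← hYZ (k + 1), ← hYZ (k + 2)] at hcz
        have hbeq : blf d ν b i k = b i ⟨k, hk⟩ := by rw [blf, dif_pos hk]
        rw [hbeq]
        have : (2 : ℚ) - ((b i ⟨k, hk⟩ : ℤ) : ℚ)
            ≤ ((Zi k : ℤ) : ℚ) - ((b i ⟨k, hk⟩ : ℤ) : ℚ) * ((Zi (k + 1) : ℤ) : ℚ)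
              + ((Zi (k + 2) : ℤ) : ℚ) := by linarith
        exact_mod_cast this
      have hgr := leg_greatest (ν i) (blf d ν b i) (legN (List.ofFn (b i)))
        (hNrec i) (hb2 i) (hNν i) (hNν1 i) m Zi hZ0 hZtop hZc ((j : ℕ) + 1)
        (by have := j.isLt; omega)
      have hzval : z (some ⟨i, j⟩) = ((Zi ((j : ℕ) + 1) : ℤ) : ℚ) := by
        have h7 : Zi ((j : ℕ) + 1) = f (some ⟨i, j⟩) := by
          simp only [hZidef]
          rw [if_neg (by omega)]
          simp only [Nat.add_sub_cancel]
          rw [dif_pos j.isLt]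
        rw [h7, ← hf]
      rw [hzval]
      show ((Zi ((j : ℕ) + 1) : ℤ) : ℚ)
        ≤ ((legwp (ν i) (legN (List.ofFn (b i))) m ((j : ℕ) + 1) : ℤ) : ℚ)
      exact_mod_cast hgr
  have hWlb : ∀ (m : ℤ) (z : Option ((i : Fin d) × Fin (ν i)) → ℚ),
      (∀ u, ∃ k : ℤ, z u = (k : ℚ)) → z none = ((m : ℤ) : ℚ) →
      (∀ v, v ≠ none → z ⬝ᵥ I.mulVec (Pi.single v 1) ≤ 0) → WWfun d ν b m ≤ z := by
    intro m z hzint hznone hzcon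
    choose f hf using hzint
    intro u
    rcases u with _ | ⟨i, j⟩
    · rw [hznone]
      exact le_of_eq rfl
    · set Zi : ℕ → ℤ := fun t => if t = 0 then f none
        else if h : t - 1 < ν i then f (some ⟨i, ⟨t - 1, h⟩⟩) else 0 with hZidef
      have hYZ : ∀ t, ((Zi t : ℤ) : ℚ) = Ybar ν z i t := by
        intro t
        simp only [hZidef, Ybar]
        by_cases h0 : t = 0
        · rw [if_pos h0, if_pos h0, ← hf none]
        · rw [if_neg h0, if_neg h0]
          by_cases h1 : t - 1 < ν i
          · rw [dif_pos h1, dif_pos h1, ← hf _]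
          · rw [dif_neg h1, dif_neg h1]
            norm_num
      have hZ0 : Zi 0 = m := by
        have h5 : ((f none : ℤ) : ℚ) = ((m : ℤ) : ℚ) := by rw [← hf none, hznone]
        have h6 : f none = m := by exact_mod_cast h5
        simp only [hZidef]
        simpa using h6
      have hZtop : Zi (ν i + 1) = 0 := by
        simp only [hZidef]
        rw [if_neg (by omega), dif_neg (by omega)]
      have hZc : ∀ k, k < ν i →
          Zi k - blf d ν b i k * Zi (k + 1) + Zi (k + 2) ≤ 0 := by
        intro k hk
        have hcz := hzcon (some ⟨i, ⟨k, hk⟩⟩) (by simp)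
        rw [Bleg b I hsym hIdiag hI0leg hIleg hIcross z i ⟨k, hk⟩] at hcz
        simp only [Fin.val_mk] at hcz
        rw [← hYZ k, ← hYZ (k + 1), ← hYZ (k + 2)] at hcz
        have hbeq : blf d ν b i k = b i ⟨k, hk⟩ := by rw [blf, dif_pos hk]
        rw [hbeq]
        have : ((Zi k : ℤ) : ℚ) - ((b i ⟨k, hk⟩ : ℤ) : ℚ) * ((Zi (k + 1) : ℤ) : ℚ)
            + ((Zi (k + 2) : ℤ) : ℚ) ≤ 0 := by linarith
        exact_mod_cast this
      have hgr := leg_lb (ν i) (blf d ν b i) (legN (List.ofFn (b i)))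
        (hNrec i) (hb2 i) (hNν i) (hNν1 i) m Zi hZ0 hZtop hZc ((j : ℕ) + 1)
        (by have := j.isLt; omega)
      have hzval : z (some ⟨i, j⟩) = ((Zi ((j : ℕ) + 1) : ℤ) : ℚ) := by
        have h7 : Zi ((j : ℕ) + 1) = f (some ⟨i, j⟩) := by
          simp only [hZidef]
          rw [if_neg (by omega)]
          simp only [Nat.add_sub_cancel]
          rw [dif_pos j.isLt]
        rw [h7, ← hf]
      rw [hzval]
      show ((legwp (ν i) (legN (List.ofFn (b i))) m ((j : ℕ) + 1) : ℤ) : ℚ)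
        ≤ ((Zi ((j : ℕ) + 1) : ℤ) : ℚ)
      exact_mod_cast hgr
  -- identification of xs
  have hxs_eq : ∀ ℓ : ℤ, 0 ≤ ℓ → xs ℓ = ZK - WWfun d ν b (Δ - ℓ) := by
    intro ℓ h0
    obtain ⟨⟨hsint, hsnone, hscon⟩, hslb⟩ := hxs ℓ h0
    have hmem : (ZK - WWfun d ν b (Δ - ℓ)) ∈
        {y | (∀ v, ∃ k : ℤ, y v - rs v = (k : ℚ)) ∧ y none = rs none + (ℓ : ℚ) ∧
          ∀ v, v ≠ none → y ⬝ᵥ I.mulVec (Pi.single v 1) ≤ 0} := by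
      refine ⟨?_, ?_, ?_⟩
      · intro v
        obtain ⟨k1, hk1⟩ := hrs2 v
        obtain ⟨k2, hk2⟩ := hWint (Δ - ℓ) v
        refine ⟨k1 - k2, ?_⟩
        rw [Pi.sub_apply, hk2]
        push_cast
        linarith [hk1]
      · rw [Pi.sub_apply, show WWfun d ν b (Δ - ℓ) none = ((Δ - ℓ : ℤ) : ℚ) from rfl]
        push_cast
        linarith [hΔ]
      · intro v hv
        rw [sub_dotProduct]
        have h5 := hWcon (Δ - ℓ) v hv
        have h6 := hZK v
        linarith
    have h1 := hslb hmem
    have hmem2' : (∀ u, ∃ k : ℤ, (ZK - xs ℓ) u = (k : ℚ)) ∧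
        (ZK - xs ℓ) none = ((Δ - ℓ : ℤ) : ℚ) ∧
        (∀ v, v ≠ none → I v v + 2 ≤ (ZK - xs ℓ) ⬝ᵥ I.mulVec (Pi.single v 1)) := by
      refine ⟨?_, ?_, ?_⟩
      · intro u
        obtain ⟨k1, hk1⟩ := hrs2 u
        obtain ⟨k2, hk2⟩ := hsint u
        refine ⟨k1 - k2, ?_⟩
        rw [Pi.sub_apply]
        push_cast
        linarith [hk1, hk2]
      · rw [Pi.sub_apply, hsnone]
        push_cast
        linarith [hΔ]
      · intro v hv
        rw [sub_dotProduct]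
        have h5 := hscon v hv
        have h6 := hZK v
        linarith
    have h2 := hWub (Δ - ℓ) (ZK - xs ℓ) hmem2'.1 hmem2'.2.1 hmem2'.2.2
    funext v
    have h1v := h1 v
    have h2v := h2 v
    rw [Pi.sub_apply] at h1v h2v ⊢
    linarith
  constructor
  · -- part (a)
    intro ℓ h0 hΔℓ
    rw [hxs_eq ℓ h0]
    rw [chiZK I hsym ZK (WWfun d ν b (Δ - ℓ))]
    have hm0 : (0 : ℤ) ≤ Δ - ℓ := by omega
    obtain ⟨⟨hxint, hxnone, hxcon⟩, hxlb⟩ := hx (Δ - ℓ) hm0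
    have hWlex : WWfun d ν b (Δ - ℓ) ≤ x (Δ - ℓ) :=
      hWlb (Δ - ℓ) (x (Δ - ℓ)) hxint hxnone hxcon
    apply le_antisymm
    · exact R4 I hsym hIint hIoff ZK hZK none ((Δ - ℓ : ℤ) : ℚ) (WWfun d ν b (Δ - ℓ))
        ⟨⟨hWint (Δ - ℓ), rfl, hWcon (Δ - ℓ)⟩,
          fun z hz => hWub (Δ - ℓ) z hz.1 hz.2.1 hz.2.2⟩
        (x (Δ - ℓ)) hxint hxnone hWlex
    · exact R3 I hsym hIint hIoff ZK hZK none ((Δ - ℓ : ℤ) : ℚ) (x (Δ - ℓ))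
        ⟨⟨hxint, hxnone, hxcon⟩, hxlb⟩
        (WWfun d ν b (Δ - ℓ)) (hWint (Δ - ℓ)) rfl hWlex
  · -- part (b)
    intro ℓ h0 hle
    have h0' : (0 : ℤ) ≤ Δ - 1 - ℓ := by omega
    rw [hxs_eq (Δ - 1 - ℓ) h0']
    have hsimp : Δ - (Δ - 1 - ℓ) = ℓ + 1 := by ring
    rw [hsimp]
    rw [sub_dotProduct, hZK none, hI00]
    rw [Bnone I hsym b₀ hν hI00 hI0leg (WWfun d ν b (ℓ + 1))]
    have hsum : ∀ i : Fin d, Ybar ν (WWfun d ν b (ℓ + 1)) i 1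
        = ((⌈((ℓ * ω i : ℤ) : ℚ) / ((α i : ℤ) : ℚ)⌉ : ℤ) : ℚ) := by
      intro i
      rw [hYbW (ℓ + 1) i 1 (by omega)]
      congr 1
      rw [legwp, if_pos (by have := hν i; omega : 1 ≤ ν i)]
      show (legw (legN (List.ofFn (b i))) (ℓ + 1) 0 * legN (List.ofFn (b i)) 1
          + legN (List.ofFn (b i)) 0 - legN (List.ofFn (b i)) 1 - 1)
          / legN (List.ofFn (b i)) 0 = _
      rw [show legw (legN (List.ofFn (b i))) (ℓ + 1) 0 = ℓ + 1 from rfl]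
      rw [hN0 i, hN1 i]
      rw [ceil_int_div (ℓ * ω i) (α i) (hαpos i)]
      congr 1
      ring
    rw [Finset.sum_congr rfl fun i _ => hsum i]
    rw [hN ℓ]
    rw [show WWfun d ν b (ℓ + 1) none = ((ℓ + 1 : ℤ) : ℚ) from rfl]
    push_cast
    ring
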